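/- Let λ ∈ ℝ^d be a nonzero vector and let H = {y ∈ ℝ^d : ⟨λ|y⟩ ≤ 0} be the corresponding closed half-space. Let A ⊆ ℝ^d be a closed set with ∅ ≠ A ≠ ℝ^d and H + A ⊆ A. Then there exists t ∈ ℝ such that A = {y ∈ ℝ^d : ⟨λ|y⟩ ≤ t}; in particular A is a translate of H. -/

import Mathlib

open Pointwise

/-- Let `l ∈ ℝ^d` be nonzero and `H = {y : ⟨l|y⟩ ≤ 0}` the
corresponding closed half-space. Let `A ⊆ ℝ^d` be closed with `∅ ≠ A ≠ ℝ^d` and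
`H + A ⊆ A`. Then there exists `t ∈ ℝ` such that `A = {y : ⟨l|y⟩ ≤ t}`; in particular
`A` is a translate of `H`. -/
theorem stmt_4 {d : ℕ}
    (l : EuclideanSpace ℝ (Fin d)) (hl : l ≠ 0)
    (A : Set (EuclideanSpace ℝ (Fin d)))
    (hAclosed : IsClosed A) (hAne : A.Nonempty) (hAnuniv : A ≠ Set.univ)
    (hHA : {y : EuclideanSpace ℝ (Fin d) | (inner ℝ l y : ℝ) ≤ 0} + A ⊆ A) :
    ∃ t : ℝ, A = {y | (inner ℝ l y : ℝ) ≤ t} ∧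
      ∃ z : EuclideanSpace ℝ (Fin d),
        A = (· + z) '' {y : EuclideanSpace ℝ (Fin d) | (inner ℝ l y : ℝ) ≤ 0} := by
  have hln : (0:ℝ) < ‖l‖ := norm_pos_iff.mpr hl
  have hc : (0:ℝ) < ‖l‖ ^ 2 := by positivity
  have hll : (inner ℝ l l : ℝ) = ‖l‖ ^ 2 := real_inner_self_eq_norm_sq l
  -- downward closedness
  have down : ∀ a ∈ A, ∀ y : EuclideanSpace ℝ (Fin d),
      (inner ℝ l y : ℝ) ≤ inner ℝ l a → y ∈ A := by
    intro a ha y hy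
    have : y - a + a ∈ ({y : EuclideanSpace ℝ (Fin d) | (inner ℝ l y : ℝ) ≤ 0} + A) := by
      refine Set.add_mem_add ?_ ha
      simp only [Set.mem_setOf_eq, inner_sub_right]
      linarith
    simpa using hHA this
  set S : Set ℝ := (fun y => (inner ℝ l y : ℝ)) '' A with hS
  have hSne : S.Nonempty := hAne.image _
  have hSbdd : BddAbove S := by
    by_contra hb
    rw [not_bddAbove_iff] at hb
    apply hAnuniv
    ext y
    simp only [Set.mem_univ, iff_true]
    obtain ⟨s, hs, hys⟩ := hb (inner ℝ l y : ℝ)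
    obtain ⟨a, ha, rfl⟩ := hs
    exact down a ha y hys.le
  set t := sSup S with ht
  have hsub : A ⊆ {y | (inner ℝ l y : ℝ) ≤ t} := fun a ha =>
    le_csSup hSbdd ⟨a, ha, rfl⟩
  have hlt : ∀ y : EuclideanSpace ℝ (Fin d), (inner ℝ l y : ℝ) < t → y ∈ A := by
    intro y hy
    obtain ⟨s, hs, hys⟩ := exists_lt_of_lt_csSup hSne hy
    obtain ⟨a, ha, rfl⟩ := hs
    exact down a ha y hys.le
  have hA : A = {y | (inner ℝ l y : ℝ) ≤ t} := by
    refine Set.Subset.antisymm hsub ?_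
    intro y (hy : (inner ℝ l y : ℝ) ≤ t)
    rcases lt_or_eq_of_le hy with h | h
    · exact hlt y h
    · -- approximate from inside
      set g : ℕ → EuclideanSpace ℝ (Fin d) :=
        fun n => y - ((1 / (n + 1)) * (‖l‖ ^ 2)⁻¹) • l with hg
      have hgA : ∀ n, g n ∈ A := by
        intro n
        apply hlt
        have : (inner ℝ l (g n) : ℝ) = t - 1 / (n + 1) := by
          simp only [hg, inner_sub_right, real_inner_smul_right, hll, h]
          field_simp
        rw [this]
        have : (0:ℝ) < 1 / (n + 1) := by positivity
        linarith
      have htend : Filter.Tendsto g Filter.atTop (nhds y) := by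
        have h1 : Filter.Tendsto (fun n : ℕ => (1 / ((n:ℝ) + 1)) * (‖l‖ ^ 2)⁻¹)
            Filter.atTop (nhds 0) := by
          simpa using tendsto_one_div_add_atTop_nhds_zero_nat.mul_const (‖l‖ ^ 2)⁻¹
        have := (h1.smul_const l).const_sub y
        simpa [hg] using this
      exact hAclosed.mem_of_tendsto htend (Filter.Eventually.of_forall hgA)
  refine ⟨t, hA, (t * (‖l‖ ^ 2)⁻¹) • l, ?_⟩
  have hz : (inner ℝ l ((t * (‖l‖ ^ 2)⁻¹) • l) : ℝ) = t := by
    rw [real_inner_smul_right, hll]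
    field_simp
  rw [hA]
  ext y
  simp only [Set.mem_setOf_eq, Set.mem_image]
  constructor
  · intro hy
    exact ⟨y - (t * (‖l‖ ^ 2)⁻¹) • l, by simp only [Set.mem_setOf_eq, inner_sub_right, hz]; linarith, by abel⟩
  · rintro ⟨h, hh, rfl⟩
    simp only [inner_add_right, hz]
    linarith [hh]
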